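/- Let C (data c, t, n₁, n₂, n₃, k₁, k₂, k₃) be a C∞-special timelike Frenet curve in E⁴₂ with k₁(s) > 0, k₂(s) ≠ 0, k₃(s) > 0 for all s, and suppose there exist real constants α, β, γ, δ with γ² > 1 and δ² > 1 such that for all s: α·k₂(s) - β·k₃(s) ≠ 0, γ·(α·k₂(s) - β·k₃(s)) - α·k₁(s) = 1, and δ·k₃(s) = -γ·k₁(s) + k₂(s). Define c̄ = c + α·n₁ + β·n₃, φ'(s) = √(γ² - 1)·|α·k₂(s) - β·k₃(s)| (the speed of c̄), and the unit tangent t̄(s) = c̄'(s)/φ'(s). Then t̄(s) = ε·(γ² - 1)^{-1/2}·(γ·t(s) + n₂(s)), where ε is the sign of α·k₂(s) - β·k₃(s), and the first curvature of c̄ with respect to its arclength satisfies ‖t̄'(s)‖/φ'(s) = √((γ·k₁(s) - k₂(s))² - k₃(s)²)/(φ'(s)·√(γ² - 1)) = √(δ² - 1)·k₃(s)/(φ'(s)·√(γ² - 1)) > 0, where ‖v‖ = √|g(v,v)|. -/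

import Mathlib

noncomputable section

/-- The indefinite metric of semi-Euclidean space `E⁴₂`:
`g(v,w) = -v₁w₁ - v₂w₂ + v₃w₃ + v₄w₄`. -/
def g4 (v w : Fin 4 → ℝ) : ℝ :=
  -(v 0 * w 0) - v 1 * w 1 + v 2 * w 2 + v 3 * w 3

/-- The semi-Euclidean norm `‖v‖ = √|g(v,v)|` in `E⁴₂`. -/
def nrm4 (v : Fin 4 → ℝ) : ℝ := Real.sqrt |g4 v v|

/-- A `C^∞`-special timelike Frenet curve in `E⁴₂`: a unit-speed timelike curve
with Frenet frame `t, n₁, n₂, n₃` (with `t, n₁` timelike and `n₂, n₃` spacelike)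
and nowhere-vanishing curvatures `k₁, k₂, k₃` satisfying the Frenet equations
`t' = -k₁·n₁`, `n₁' = k₁·t + k₂·n₂`, `n₂' = k₂·n₁ + k₃·n₃`, `n₃' = -k₃·n₂`. -/
structure TimelikeFrenetE42 where
  c : ℝ → Fin 4 → ℝ
  t : ℝ → Fin 4 → ℝ
  n1 : ℝ → Fin 4 → ℝ
  n2 : ℝ → Fin 4 → ℝ
  n3 : ℝ → Fin 4 → ℝ
  k1 : ℝ → ℝ
  k2 : ℝ → ℝ
  k3 : ℝ → ℝ
  smooth_c : ContDiff ℝ (⊤ : ℕ∞) c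
  smooth_t : ContDiff ℝ (⊤ : ℕ∞) t
  smooth_n1 : ContDiff ℝ (⊤ : ℕ∞) n1
  smooth_n2 : ContDiff ℝ (⊤ : ℕ∞) n2
  smooth_n3 : ContDiff ℝ (⊤ : ℕ∞) n3
  smooth_k1 : ContDiff ℝ (⊤ : ℕ∞) k1
  smooth_k2 : ContDiff ℝ (⊤ : ℕ∞) k2
  smooth_k3 : ContDiff ℝ (⊤ : ℕ∞) k3
  deriv_c : ∀ s, HasDerivAt c (t s) s
  unit_t : ∀ s, g4 (t s) (t s) = -1
  unit_n1 : ∀ s, g4 (n1 s) (n1 s) = -1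
  unit_n2 : ∀ s, g4 (n2 s) (n2 s) = 1
  unit_n3 : ∀ s, g4 (n3 s) (n3 s) = 1
  orth_t_n1 : ∀ s, g4 (t s) (n1 s) = 0
  orth_t_n2 : ∀ s, g4 (t s) (n2 s) = 0
  orth_t_n3 : ∀ s, g4 (t s) (n3 s) = 0
  orth_n1_n2 : ∀ s, g4 (n1 s) (n2 s) = 0
  orth_n1_n3 : ∀ s, g4 (n1 s) (n3 s) = 0
  orth_n2_n3 : ∀ s, g4 (n2 s) (n3 s) = 0
  k1_ne : ∀ s, k1 s ≠ 0
  k2_ne : ∀ s, k2 s ≠ 0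
  k3_ne : ∀ s, k3 s ≠ 0
  frenet_t : ∀ s, HasDerivAt t (-(k1 s) • n1 s) s
  frenet_n1 : ∀ s, HasDerivAt n1 (k1 s • t s + k2 s • n2 s) s
  frenet_n2 : ∀ s, HasDerivAt n2 (k2 s • n1 s + k3 s • n3 s) s
  frenet_n3 : ∀ s, HasDerivAt n3 (-(k3 s) • n2 s) s

/-- The candidate `(1,3)`-Bertrand mate `c̄ = c + α·n₁ + β·n₃`. -/
def cbar (C : TimelikeFrenetE42) (α β : ℝ) : ℝ → Fin 4 → ℝ :=
  fun s => C.c s + α • C.n1 s + β • C.n3 s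

/-- The speed `φ'(s) = √(γ² - 1)·|α·k₂(s) - β·k₃(s)|` of `c̄`. -/
def phip (C : TimelikeFrenetE42) (α β γ : ℝ) : ℝ → ℝ :=
  fun s => Real.sqrt (γ ^ 2 - 1) * |α * C.k2 s - β * C.k3 s|

/-- The unit tangent `t̄(s) = c̄'(s)/φ'(s)` of `c̄`. -/
def tbar (C : TimelikeFrenetE42) (α β γ : ℝ) : ℝ → Fin 4 → ℝ :=
  fun s => (phip C α β γ s)⁻¹ • deriv (cbar C α β) s

/-- With the hypotheses of the sufficiency construction, the unit tangent of
`c̄ = c + α·n₁ + β·n₃` is `t̄ = ε·(γ² - 1)^{-1/2}·(γ·t + n₂)` (`ε` the sign of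
`α·k₂ - β·k₃`), and the first curvature of `c̄` with respect to its arclength satisfies
`‖t̄'(s)‖/φ'(s) = √((γ·k₁ - k₂)² - k₃²)/(φ'·√(γ² - 1)) = √(δ² - 1)·k₃/(φ'·√(γ² - 1)) > 0`. -/
theorem bertrand13_E42_mate_tangent_and_first_curvature
    (C : TimelikeFrenetE42)
    (hk1 : ∀ s, 0 < C.k1 s) (hk3 : ∀ s, 0 < C.k3 s)
    (α β γ δ ε : ℝ) (hγ2 : γ ^ 2 > 1) (hδ2 : δ ^ 2 > 1)
    (h1 : ∀ s, α * C.k2 s - β * C.k3 s ≠ 0)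
    (h2 : ∀ s, γ * (α * C.k2 s - β * C.k3 s) - α * C.k1 s = 1)
    (h3 : ∀ s, δ * C.k3 s = -(γ * C.k1 s) + C.k2 s)
    (hε : ∀ s, ε = Real.sign (α * C.k2 s - β * C.k3 s)) :
    (∀ s, tbar C α β γ s =
      (ε * (Real.sqrt (γ ^ 2 - 1))⁻¹) • (γ • C.t s + C.n2 s)) ∧
    (∀ s,
      nrm4 (deriv (tbar C α β γ) s) / phip C α β γ s =
        Real.sqrt ((γ * C.k1 s - C.k2 s) ^ 2 - C.k3 s ^ 2) /
          (phip C α β γ s * Real.sqrt (γ ^ 2 - 1)) ∧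
      nrm4 (deriv (tbar C α β γ) s) / phip C α β γ s =
        Real.sqrt (δ ^ 2 - 1) * C.k3 s / (phip C α β γ s * Real.sqrt (γ ^ 2 - 1)) ∧
      0 < nrm4 (deriv (tbar C α β γ) s) / phip C α β γ s) := by
  have hγpos : (0:ℝ) < γ ^ 2 - 1 := by linarith
  have hsγ : 0 < Real.sqrt (γ ^ 2 - 1) := Real.sqrt_pos.mpr hγpos
  have hsγsq : Real.sqrt (γ ^ 2 - 1) ^ 2 = γ ^ 2 - 1 := Real.sq_sqrt hγpos.le
  -- derivative of cbar
  have hdc : ∀ s, HasDerivAt (cbar C α β)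
      ((α * C.k2 s - β * C.k3 s) • (γ • C.t s + C.n2 s)) s := by
    intro s
    have h := ((C.deriv_c s).add ((C.frenet_n1 s).const_smul α)).add
      ((C.frenet_n3 s).const_smul β)
    refine h.congr_deriv ?_
    ext i
    simp only [Pi.add_apply, Pi.smul_apply, smul_eq_mul]
    linear_combination -(C.t s i) * h2 s
  -- part 1
  have part1 : ∀ s, tbar C α β γ s =
      (ε * (Real.sqrt (γ ^ 2 - 1))⁻¹) • (γ • C.t s + C.n2 s) := by
    intro s
    have hεw : ε * |α * C.k2 s - β * C.k3 s| = α * C.k2 s - β * C.k3 s := by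
      rcases lt_or_gt_of_ne (h1 s) with h | h
      · rw [hε s, Real.sign_of_neg h, abs_of_neg h]; ring
      · rw [hε s, Real.sign_of_pos h, abs_of_pos h]; ring
    have habs : |α * C.k2 s - β * C.k3 s| ≠ 0 := abs_ne_zero.mpr (h1 s)
    show (phip C α β γ s)⁻¹ • deriv (cbar C α β) s = _
    rw [(hdc s).deriv, smul_smul]
    congr 1
    show (Real.sqrt (γ ^ 2 - 1) * |α * C.k2 s - β * C.k3 s|)⁻¹ *
      (α * C.k2 s - β * C.k3 s) = _
    field_simp
    linear_combination -hεw
  have hεsq : ε ^ 2 = 1 := by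
    rcases lt_or_gt_of_ne (h1 0) with h | h
    · rw [hε 0, Real.sign_of_neg h]; ring
    · rw [hε 0, Real.sign_of_pos h]; ring
  refine ⟨part1, fun s => ?_⟩
  -- derivative of tbar
  have htb : tbar C α β γ = fun s =>
      (ε * (Real.sqrt (γ ^ 2 - 1))⁻¹) • (γ • C.t s + C.n2 s) := funext part1
  have hdt : HasDerivAt (tbar C α β γ)
      ((ε * (Real.sqrt (γ ^ 2 - 1))⁻¹) •
        (γ • (-(C.k1 s) • C.n1 s) + (C.k2 s • C.n1 s + C.k3 s • C.n3 s))) s := by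
    rw [htb]
    exact (((C.frenet_t s).const_smul γ).add (C.frenet_n2 s)).const_smul (ε * (Real.sqrt (γ ^ 2 - 1))⁻¹)
  have hDeq : deriv (tbar C α β γ) s =
      (ε * (Real.sqrt (γ ^ 2 - 1))⁻¹ * (C.k2 s - γ * C.k1 s)) • C.n1 s +
      (ε * (Real.sqrt (γ ^ 2 - 1))⁻¹ * C.k3 s) • C.n3 s := by
    rw [hdt.deriv]; module
  set a := ε * (Real.sqrt (γ ^ 2 - 1))⁻¹ * (C.k2 s - γ * C.k1 s) with ha
  set b := ε * (Real.sqrt (γ ^ 2 - 1))⁻¹ * C.k3 s with hb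
  have hg : g4 (a • C.n1 s + b • C.n3 s) (a • C.n1 s + b • C.n3 s)
      = -(a ^ 2) + b ^ 2 := by
    have h1' := C.unit_n1 s
    have h3' := C.unit_n3 s
    have h13 := C.orth_n1_n3 s
    simp only [g4, Pi.add_apply, Pi.smul_apply, smul_eq_mul] at *
    linear_combination a ^ 2 * h1' + 2 * a * b * h13 + b ^ 2 * h3'
  have hδk : C.k2 s - γ * C.k1 s = δ * C.k3 s := by linarith [h3 s]
  have hA : a ^ 2 = δ ^ 2 * C.k3 s ^ 2 / (γ ^ 2 - 1) := by
    rw [ha, hδk, show (ε * (Real.sqrt (γ ^ 2 - 1))⁻¹ * (δ * C.k3 s)) ^ 2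
      = ε ^ 2 * ((Real.sqrt (γ ^ 2 - 1)) ^ 2)⁻¹ * (δ * C.k3 s) ^ 2 by ring,
      hεsq, hsγsq]
    ring
  have hB : b ^ 2 = C.k3 s ^ 2 / (γ ^ 2 - 1) := by
    rw [hb, show (ε * (Real.sqrt (γ ^ 2 - 1))⁻¹ * C.k3 s) ^ 2
      = ε ^ 2 * ((Real.sqrt (γ ^ 2 - 1)) ^ 2)⁻¹ * C.k3 s ^ 2 by ring,
      hεsq, hsγsq]
    ring
  have hval : -(a ^ 2) + b ^ 2 = -((δ ^ 2 - 1) * C.k3 s ^ 2 / (γ ^ 2 - 1)) := by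
    rw [hA, hB]; ring
  have hk3s := hk3 s
  have hpos : 0 < (δ ^ 2 - 1) * C.k3 s ^ 2 / (γ ^ 2 - 1) :=
    div_pos (mul_pos (by linarith) (pow_pos hk3s 2)) hγpos
  have hnrm : nrm4 (deriv (tbar C α β γ) s)
      = Real.sqrt (δ ^ 2 - 1) * C.k3 s / Real.sqrt (γ ^ 2 - 1) := by
    rw [nrm4, hDeq, hg, hval, abs_neg, abs_of_pos hpos]
    rw [show (δ ^ 2 - 1) * C.k3 s ^ 2 / (γ ^ 2 - 1)
        = (Real.sqrt (δ ^ 2 - 1) * C.k3 s / Real.sqrt (γ ^ 2 - 1)) ^ 2 by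
      rw [div_pow, mul_pow, Real.sq_sqrt (by linarith : (0:ℝ) ≤ δ ^ 2 - 1),
        hsγsq]]
    exact Real.sqrt_sq (by positivity)
  have hφpos : 0 < phip C α β γ s := by
    have : 0 < |α * C.k2 s - β * C.k3 s| := abs_pos.mpr (h1 s)
    exact mul_pos hsγ this
  have hsqeq : Real.sqrt ((γ * C.k1 s - C.k2 s) ^ 2 - C.k3 s ^ 2)
      = Real.sqrt (δ ^ 2 - 1) * C.k3 s := by
    have : (γ * C.k1 s - C.k2 s) ^ 2 - C.k3 s ^ 2
        = (Real.sqrt (δ ^ 2 - 1) * C.k3 s) ^ 2 := by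
      rw [mul_pow, Real.sq_sqrt (by linarith : (0:ℝ) ≤ δ ^ 2 - 1)]
      linear_combination (C.k2 s - γ * C.k1 s + δ * C.k3 s) * hδk
    rw [this, Real.sqrt_sq (by positivity)]
  have hmain : nrm4 (deriv (tbar C α β γ) s) / phip C α β γ s
      = Real.sqrt (δ ^ 2 - 1) * C.k3 s / (phip C α β γ s * Real.sqrt (γ ^ 2 - 1)) := by
    rw [hnrm, div_div, mul_comm (Real.sqrt (γ ^ 2 - 1)) (phip C α β γ s)]
  refine ⟨?_, hmain, ?_⟩
  · rw [hmain, hsqeq]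
  · rw [hmain]
    have hδ3 : 0 < Real.sqrt (δ ^ 2 - 1) := Real.sqrt_pos.mpr (by linarith)
    exact div_pos (mul_pos hδ3 hk3s) (mul_pos hφpos hsγ)
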